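/- Let I − (Δτ/2)A be a real (M−1)×(M−1) matrix where A is tridiagonal with constant diagonal entries a_{jj} = −2D/(a(Δy)² L) − (g/a)L and whose symmetric part has off-diagonal (super/sub) entries all equal to −(Δτ/2)[(r_g/(4a))(C_c − c_c^∞) + D/(a(Δy)² L)] after forming (I − (Δτ/2)A + (I − (Δτ/2)A)ᵀ)/2. Assume a, D, g, r_g, Δy, Δτ, L > 0 and |C_c − c_c^∞| ≤ γ with γ > 0. If Δτ < 4a/(r_g γ), then every eigenvalue λ of the symmetric part satisfies λ ≥ 1 − Δτ·r_g·γ/(4a) > 0, and hence the linear system (I − (Δτ/2)A)x = b has a unique solution for every b. -/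

import Mathlib

open Matrix

/-- Sum of an indicator supported on at most one point. -/
lemma indicator_sum_le {n : ℕ} (P : Fin n → Prop) [DecidablePred P]
    (hP : ∀ i j, P i → P j → i = j) {c : ℝ} (hc : 0 ≤ c) :
    ∑ i : Fin n, (if P i then c else 0) ≤ c := by
  classical
  rw [Finset.sum_ite, Finset.sum_const, Finset.sum_const_zero, add_zero, nsmul_eq_mul]
  have hcard : (Finset.univ.filter P).card ≤ 1 :=
    Finset.card_le_one.mpr fun a ha b hb =>
      hP a b (Finset.mem_filter.mp ha).2 (Finset.mem_filter.mp hb).2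
  calc ((Finset.univ.filter P).card : ℝ) * c ≤ 1 * c :=
        mul_le_mul_of_nonneg_right (by exact_mod_cast hcard) hc
    _ = c := one_mul c

/-- Conjugation of a positive definite matrix by a matrix with injective `mulVec`. -/
lemma posDef_conj {n : Type*} [Fintype n] [DecidableEq n] {A B : Matrix n n ℝ}
    (hA : A.PosDef) (hB : Function.Injective B.mulVec) : (Bᴴ * A * B).PosDef := by
  refine Matrix.PosDef.of_dotProduct_mulVec_pos (Matrix.isHermitian_conjTranspose_mul_mul B hA.1) fun x hx => ?_
  have hBx : B *ᵥ x ≠ 0 := fun h => hx (hB (by rw [h, Matrix.mulVec_zero]))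
  simpa only [star_mulVec, Matrix.dotProduct_mulVec, Matrix.vecMul_vecMul] using
    hA.dotProduct_mulVec_pos hBx

/-- A real symmetric matrix with positive eigenvalues is positive definite. -/
lemma posDef_of_eigenvalues_pos {n : Type*} [Fintype n] [DecidableEq n] {S : Matrix n n ℝ}
    (hS : S.IsHermitian) (h : ∀ i, 0 < hS.eigenvalues i) : S.PosDef := by
  have h2 := hS.eigenvectorUnitary.2
  rw [Matrix.mem_unitaryGroup_iff'] at h2
  have h3 := hS.eigenvectorUnitary.2
  rw [Matrix.mem_unitaryGroup_iff] at h3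
  have hU : IsUnit (star (hS.eigenvectorUnitary : Matrix n n ℝ)) :=
    ⟨⟨star (hS.eigenvectorUnitary : Matrix n n ℝ), (hS.eigenvectorUnitary : Matrix n n ℝ),
      h2, h3⟩, rfl⟩
  have hdiag : (Matrix.diagonal (RCLike.ofReal ∘ hS.eigenvalues) : Matrix n n ℝ).PosDef :=
    Matrix.posDef_diagonal_iff.mpr fun i => by simpa using h i
  have := posDef_conj hdiag (Matrix.mulVec_injective_iff_isUnit.mpr hU)
  rw [Matrix.star_eq_conjTranspose, Matrix.conjTranspose_conjTranspose] at this
  rw [hS.spectral_theorem]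
  exact this

theorem peaceman_rachford_implicit_step_solvable
    (M : ℕ) (hM : 2 ≤ M)
    (a D g rg Δy Δτ L Cc ccInf γ : ℝ)
    (ha : 0 < a) (hD : 0 < D) (hg : 0 < g) (hrg : 0 < rg)
    (hΔy : 0 < Δy) (hΔτ : 0 < Δτ) (hL : 0 < L) (hγ : 0 < γ)
    (hCc : |Cc - ccInf| ≤ γ)
    (hstep : Δτ < 4 * a / (rg * γ))
    (A : Matrix (Fin (M - 1)) (Fin (M - 1)) ℝ)
    (hsym : (1 / 2 : ℝ) •
        ((1 - (Δτ / 2) • A) + (1 - (Δτ / 2) • A)ᵀ)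
      = Matrix.of fun i j : Fin (M - 1) =>
        if (i : ℕ) = (j : ℕ) then
          1 + (Δτ / 2) * (2 * D / (a * Δy ^ 2 * L) + (g / a) * L)
        else if (i : ℕ) + 1 = (j : ℕ) ∨ (j : ℕ) + 1 = (i : ℕ) then
          -(Δτ / 2) * ((rg / (4 * a)) * (Cc - ccInf) + D / (a * Δy ^ 2 * L))
        else 0) :
    (∀ lam ∈ spectrum ℝ
        ((1 / 2 : ℝ) • ((1 - (Δτ / 2) • A) + (1 - (Δτ / 2) • A)ᵀ)),
      1 - Δτ * rg * γ / (4 * a) ≤ lam) ∧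
    0 < 1 - Δτ * rg * γ / (4 * a) ∧
    ∀ b : Fin (M - 1) → ℝ, ∃! x, (1 - (Δτ / 2) • A).mulVec x = b := by
  classical
  set d0 : ℝ := 1 + (Δτ / 2) * (2 * D / (a * Δy ^ 2 * L) + (g / a) * L) with hd0
  set β : ℝ := -(Δτ / 2) * ((rg / (4 * a)) * (Cc - ccInf) + D / (a * Δy ^ 2 * L)) with hβdef
  set S : Matrix (Fin (M - 1)) (Fin (M - 1)) ℝ :=
    Matrix.of fun i j : Fin (M - 1) =>
      if (i : ℕ) = (j : ℕ) then d0
      else if (i : ℕ) + 1 = (j : ℕ) ∨ (j : ℕ) + 1 = (i : ℕ) then β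
      else 0 with hSdef
  -- bound on the off-diagonal entry
  have hD' : 0 < D / (a * Δy ^ 2 * L) := by positivity
  have hβ : |β| ≤ (Δτ / 2) * (rg * γ / (4 * a) + D / (a * Δy ^ 2 * L)) := by
    have h1 : |β| = (Δτ / 2) * |(rg / (4 * a)) * (Cc - ccInf) + D / (a * Δy ^ 2 * L)| := by
      rw [hβdef, neg_mul, abs_neg, abs_mul, abs_of_pos (by positivity : (0:ℝ) < Δτ / 2)]
    have h2 : |(rg / (4 * a)) * (Cc - ccInf) + D / (a * Δy ^ 2 * L)|
        ≤ rg * γ / (4 * a) + D / (a * Δy ^ 2 * L) := by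
      refine (abs_add_le _ _).trans ?_
      have : |(rg / (4 * a)) * (Cc - ccInf)| ≤ rg * γ / (4 * a) := by
        rw [abs_mul, abs_of_pos (by positivity : (0:ℝ) < rg / (4 * a))]
        calc rg / (4 * a) * |Cc - ccInf| ≤ rg / (4 * a) * γ :=
              mul_le_mul_of_nonneg_left hCc (by positivity)
          _ = rg * γ / (4 * a) := by ring
      have hD'' : |D / (a * Δy ^ 2 * L)| = D / (a * Δy ^ 2 * L) := abs_of_pos hD'
      linarith
    rw [h1]
    exact mul_le_mul_of_nonneg_left h2 (by positivity)
  -- positivity of the constant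
  have hc : 0 < 1 - Δτ * rg * γ / (4 * a) := by
    have h1 : Δτ * (rg * γ) < 4 * a := (lt_div_iff₀ (by positivity)).mp hstep
    have h2 : Δτ * rg * γ / (4 * a) < 1 := by
      rw [div_lt_one (by positivity)]; nlinarith
    linarith
  -- the key spectral bound for S
  have key : ∀ lam ∈ spectrum ℝ S, 1 - Δτ * rg * γ / (4 * a) ≤ lam := by
    intro lam hlam
    have hlam' : lam ∈ spectrum ℝ (Matrix.toLin' S) := by
      have := AlgEquiv.spectrum_eq (Matrix.toLinAlgEquiv' :
        Matrix (Fin (M-1)) (Fin (M-1)) ℝ ≃ₐ[ℝ] _) S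
      rw [show (Matrix.toLinAlgEquiv' S : (Fin (M-1) → ℝ) →ₗ[ℝ] (Fin (M-1) → ℝ))
        = Matrix.toLin' S from rfl] at this
      rw [this]; exact hlam
    have heig : Module.End.HasEigenvalue (Matrix.toLin' S) lam :=
      Module.End.hasEigenvalue_iff_mem_spectrum.mpr hlam'
    obtain ⟨k, hk⟩ := eigenvalue_mem_ball heig
    rw [Metric.mem_closedBall, Real.dist_eq] at hk
    have hdiag : S k k = d0 := by simp [hSdef]
    have hsum : ∑ j ∈ Finset.univ.erase k, ‖S k j‖ ≤ 2 * |β| := by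
      have habs : 0 ≤ |β| := abs_nonneg β
      calc ∑ j ∈ Finset.univ.erase k, ‖S k j‖
          ≤ ∑ j ∈ Finset.univ.erase k,
              ((if (k:ℕ) + 1 = (j:ℕ) then |β| else 0) +
               (if (j:ℕ) + 1 = (k:ℕ) then |β| else 0)) := by
            refine Finset.sum_le_sum fun j hj => ?_
            have hjk : (k:ℕ) ≠ (j:ℕ) := by
              intro h; exact (Finset.mem_erase.mp hj).1 (Fin.ext h.symm)
            rw [show S k j = if (k:ℕ) = (j:ℕ) then d0
              else if (k:ℕ) + 1 = (j:ℕ) ∨ (j:ℕ) + 1 = (k:ℕ) then β else 0 from rfl,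
              if_neg hjk]
            by_cases hnb : (k:ℕ) + 1 = (j:ℕ) ∨ (j:ℕ) + 1 = (k:ℕ)
            · rw [if_pos hnb]
              rcases hnb with h | h
              · rw [if_pos h]
                have : (0:ℝ) ≤ if (j:ℕ) + 1 = (k:ℕ) then |β| else 0 := by positivity
                simpa [Real.norm_eq_abs] using by linarith
              · rw [if_pos h]
                have : (0:ℝ) ≤ if (k:ℕ) + 1 = (j:ℕ) then |β| else 0 := by positivity
                simpa [Real.norm_eq_abs] using by linarith
            · rw [if_neg hnb]
              have h1 : (0:ℝ) ≤ if (k:ℕ) + 1 = (j:ℕ) then |β| else 0 := by positivity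
              have h2 : (0:ℝ) ≤ if (j:ℕ) + 1 = (k:ℕ) then |β| else 0 := by positivity
              simpa using by linarith
        _ ≤ ∑ j : Fin (M-1),
              ((if (k:ℕ) + 1 = (j:ℕ) then |β| else 0) +
               (if (j:ℕ) + 1 = (k:ℕ) then |β| else 0)) := by
            refine Finset.sum_le_sum_of_subset_of_nonneg (Finset.erase_subset _ _) ?_
            intro j _ _; positivity
        _ = (∑ j : Fin (M-1), (if (k:ℕ) + 1 = (j:ℕ) then |β| else 0)) +
            (∑ j : Fin (M-1), (if (j:ℕ) + 1 = (k:ℕ) then |β| else 0)) :=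
            Finset.sum_add_distrib
        _ ≤ |β| + |β| := by
            refine add_le_add ?_ ?_
            · exact indicator_sum_le _ (fun i j hi hj => Fin.ext (hi.symm.trans hj)) habs
            · exact indicator_sum_le _ (fun i j hi hj => Fin.ext (by omega)) habs
        _ = 2 * |β| := by ring
    have hband : |lam - d0| ≤ 2 * |β| := by rw [← hdiag]; exact hk.trans hsum
    have hlow : d0 - 2 * |β| ≤ lam := by
      have := abs_le.mp hband
      linarith [this.1]
    have hexp : (Δτ / 2) * (2 * D / (a * Δy ^ 2 * L) + (g / a) * L)
        = Δτ * (D / (a * Δy ^ 2 * L)) + (Δτ / 2) * ((g / a) * L) := by ring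
    have hG : 0 ≤ (Δτ / 2) * ((g / a) * L) := by positivity
    have hQ : Δτ * (rg * γ / (4 * a)) = Δτ * rg * γ / (4 * a) := by ring
    have h2β : 2 * |β| ≤ Δτ * (rg * γ / (4 * a)) + Δτ * (D / (a * Δy ^ 2 * L)) := by
      nlinarith
    rw [hd0] at hlow
    linarith
  -- S is symmetric
  have hS : S.IsHermitian := by
    refine Matrix.IsHermitian.ext fun i j => ?_
    rw [show S j i = if (j:ℕ) = (i:ℕ) then d0
      else if (j:ℕ) + 1 = (i:ℕ) ∨ (i:ℕ) + 1 = (j:ℕ) then β else 0 from rfl,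
      show S i j = if (i:ℕ) = (j:ℕ) then d0
      else if (i:ℕ) + 1 = (j:ℕ) ∨ (j:ℕ) + 1 = (i:ℕ) then β else 0 from rfl, star_trivial]
    by_cases h1 : (i:ℕ) = (j:ℕ)
    · rw [if_pos h1, if_pos h1.symm]
    · rw [if_neg h1, if_neg (fun h => h1 h.symm)]
      by_cases h2 : (i:ℕ) + 1 = (j:ℕ) ∨ (j:ℕ) + 1 = (i:ℕ)
      · rw [if_pos h2, if_pos h2.symm]
      · rw [if_neg h2, if_neg (fun h => h2 h.symm)]
  -- S is positive definite
  have hSpos : S.PosDef := by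
    refine posDef_of_eigenvalues_pos hS fun i => ?_
    exact lt_of_lt_of_le hc (key _ (hS.eigenvalues_mem_spectrum_real i))
  -- the full matrix is injective
  set B : Matrix (Fin (M-1)) (Fin (M-1)) ℝ := (1 : Matrix _ _ ℝ) - (Δτ / 2) • A with hBdef
  have hsym' : (1 / 2 : ℝ) • (B + Bᵀ) = S := hsym
  have hBinj : Function.Injective B.mulVec := by
    intro x y hxy
    by_contra hne
    have hz : x - y ≠ 0 := sub_ne_zero.mpr hne
    have hBz : B *ᵥ (x - y) = 0 := by
      rw [Matrix.mulVec_sub, hxy, sub_self]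
    have hpos := hSpos.dotProduct_mulVec_pos hz
    rw [← hsym'] at hpos
    set z := x - y
    have hcalc : star z ⬝ᵥ ((1 / 2 : ℝ) • (B + Bᵀ)) *ᵥ z = 0 := by
      rw [Matrix.smul_mulVec, Matrix.add_mulVec, hBz, zero_add,
        dotProduct_smul, star_trivial, Matrix.dotProduct_mulVec, Matrix.vecMul_transpose,
        hBz, zero_dotProduct, smul_zero]
    rw [hcalc] at hpos
    exact lt_irrefl 0 hpos
  have hBsurj : Function.Surjective B.mulVec := by
    have : Function.Injective B.mulVecLin := hBinj
    exact
      (LinearMap.injective_iff_surjective (f := B.mulVecLin)).mp this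
  refine ⟨?_, hc, ?_⟩
  · intro lam hlam
    rw [hsym] at hlam
    exact key lam hlam
  · intro b
    obtain ⟨x, hx⟩ := hBsurj b
    exact ⟨x, hx, fun y hy => hBinj (hy.trans hx.symm)⟩
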